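/- Let n ≥ 1, let T be an n×n real matrix, p⁰ ∈ ℝⁿ, N ≥ 1, λ > 0 and ω ≥ 0. Define pᵗ = p⁰ Tᵗ and the trajectory-regularized objective L[h] = (1/N) · Σ_{t=0}^{N−1} (pᵗ · ((T − I)h)) − (λ/(2N)) · Σ_{t=0}^{N−1} (pᵗ · ((T − I)h))² − (λω/(2N)) · ‖h‖² for h ∈ ℝⁿ. Then h is a critical point of L (i.e., the gradient of L at h is zero) if and only if λ · [ Σ_{t=0}^{N−1} (p⁰(Tᵗ⁺¹ − Tᵗ) · h) · p⁰(Tᵗ⁺¹ − Tᵗ) + ω h ] = p⁰ Tᴺ − p⁰, where p⁰(Tᵗ⁺¹ − Tᵗ) ∈ ℝⁿ denotes the row vector p⁰Tᵗ⁺¹ − p⁰Tᵗ. -/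

import Mathlib

open Finset Matrix

noncomputable def dcl (n : ℕ) (c : Fin n → ℝ) : (Fin n → ℝ) →L[ℝ] ℝ :=
  ∑ i, c i • ContinuousLinearMap.proj i

lemma dcl_apply (n : ℕ) (c v : Fin n → ℝ) : dcl n c v = c ⬝ᵥ v := by
  simp [dcl, dotProduct, mul_comm]

lemma dcl_hasFDeriv (n : ℕ) (c x : Fin n → ℝ) :
    HasFDerivAt (fun v : Fin n → ℝ => c ⬝ᵥ v) (dcl n c) x := by
  have h : (fun v : Fin n → ℝ => c ⬝ᵥ v) = ⇑(dcl n c) := by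
    funext v; rw [dcl_apply]
  rw [h]; exact (dcl n c).hasFDerivAt

lemma sum_dot {n : ℕ} {ι : Type*} (s : Finset ι) (f : ι → Fin n → ℝ) (v : Fin n → ℝ) :
    (∑ t ∈ s, f t) ⬝ᵥ v = ∑ t ∈ s, f t ⬝ᵥ v := by
  simp only [dotProduct, Finset.sum_apply, Finset.sum_mul]
  exact Finset.sum_comm

theorem stmt_7 (n : ℕ) (hn : 1 ≤ n) (T : Matrix (Fin n) (Fin n) ℝ) (p0 : Fin n → ℝ)
    (N : ℕ) (hN : 1 ≤ N) (lam ω : ℝ) (hlam : 0 < lam) (hω : 0 ≤ ω)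
    (L : (Fin n → ℝ) → ℝ)
    (hL : ∀ h : Fin n → ℝ,
      L h = (1 / N) * ∑ t ∈ Finset.range N,
              ((p0 ᵥ* T ^ t) ⬝ᵥ ((T - 1) *ᵥ h))
            - (lam / (2 * N)) * ∑ t ∈ Finset.range N,
              ((p0 ᵥ* T ^ t) ⬝ᵥ ((T - 1) *ᵥ h)) ^ 2
            - (lam * ω / (2 * N)) * ∑ i, (h i) ^ 2) :
    ∀ h : Fin n → ℝ,
      fderiv ℝ L h = 0 ↔
      lam • (∑ t ∈ Finset.range N,
              (((p0 ᵥ* T ^ (t + 1) - p0 ᵥ* T ^ t) ⬝ᵥ h) •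
                (p0 ᵥ* T ^ (t + 1) - p0 ᵥ* T ^ t))
            + ω • h)
        = p0 ᵥ* T ^ N - p0 := by
  intro h
  set q : ℕ → (Fin n → ℝ) := fun t => p0 ᵥ* T ^ (t + 1) - p0 ᵥ* T ^ t with hq
  set w : Fin n → ℝ := p0 ᵥ* T ^ N - p0 with hw
  have hwq : ∑ t ∈ Finset.range N, q t = w := by
    rw [hq, Finset.sum_range_sub (fun t => p0 ᵥ* T ^ t)]
    simp [hw]
  have hdot : ∀ (t : ℕ) (v : Fin n → ℝ),
      (p0 ᵥ* T ^ t) ⬝ᵥ ((T - 1) *ᵥ v) = q t ⬝ᵥ v := by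
    intro t v
    rw [dotProduct_mulVec, vecMul_sub, vecMul_vecMul, vecMul_one, ← pow_succ]
  have hL' : ∀ v : Fin n → ℝ,
      L v = (1 / N) * (w ⬝ᵥ v)
            - (lam / (2 * N)) * ∑ t ∈ Finset.range N, (q t ⬝ᵥ v) ^ 2
            - (lam * ω / (2 * N)) * ∑ i, (v i) ^ 2 := by
    intro v
    rw [hL v]
    congr 2
    · congr 1
      rw [← hwq, sum_dot]
      exact Finset.sum_congr rfl fun t _ => hdot t v
    · congr 1
      exact Finset.sum_congr rfl fun t _ => by rw [hdot t v]
  set S : Fin n → ℝ := ∑ t ∈ Finset.range N, (q t ⬝ᵥ h) • q t with hS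
  set c : Fin n → ℝ := (N : ℝ)⁻¹ • (w - lam • (S + ω • h)) with hc
  have hNne : (N : ℝ) ≠ 0 := by positivity
  have hmess : HasFDerivAt L
      ((1 / (N:ℝ)) • dcl n w
        - (lam / (2 * N)) • ∑ t ∈ Finset.range N,
            ((q t ⬝ᵥ h) • dcl n (q t) + (q t ⬝ᵥ h) • dcl n (q t))
        - (lam * ω / (2 * N)) • ∑ i,
            (h i • (ContinuousLinearMap.proj i : (Fin n → ℝ) →L[ℝ] ℝ)
              + h i • ContinuousLinearMap.proj i)) h := by
    have e : L = fun v => (1 / N) * (w ⬝ᵥ v)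
            - (lam / (2 * N)) * ∑ t ∈ Finset.range N, (q t ⬝ᵥ v) ^ 2
            - (lam * ω / (2 * N)) * ∑ i, (v i) ^ 2 := funext hL'
    rw [e]
    apply HasFDerivAt.sub
    apply HasFDerivAt.sub
    · exact (dcl_hasFDeriv n w h).const_mul _
    · apply HasFDerivAt.const_mul
      apply HasFDerivAt.fun_sum
      intro t _
      have := (dcl_hasFDeriv n (q t) h).fun_mul (dcl_hasFDeriv n (q t) h)
      simpa [sq] using this
    · apply HasFDerivAt.const_mul
      apply HasFDerivAt.fun_sum
      intro i _
      have hp : HasFDerivAt (fun v : Fin n → ℝ => v i)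
          (ContinuousLinearMap.proj i : (Fin n → ℝ) →L[ℝ] ℝ) h :=
        (hasStrictFDerivAt_apply i h).hasFDerivAt
      simpa [sq] using hp.fun_mul hp
  have hDeq : ((1 / (N:ℝ)) • dcl n w
        - (lam / (2 * N)) • ∑ t ∈ Finset.range N,
            ((q t ⬝ᵥ h) • dcl n (q t) + (q t ⬝ᵥ h) • dcl n (q t))
        - (lam * ω / (2 * N)) • ∑ i,
            (h i • (ContinuousLinearMap.proj i : (Fin n → ℝ) →L[ℝ] ℝ)
              + h i • ContinuousLinearMap.proj i)) = dcl n c := by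
    apply ContinuousLinearMap.ext
    intro v
    simp only [ContinuousLinearMap.sub_apply, ContinuousLinearMap.smul_apply,
      ContinuousLinearMap.sum_apply, ContinuousLinearMap.add_apply, dcl_apply,
      ContinuousLinearMap.proj_apply, smul_eq_mul]
    rw [hc]
    simp only [smul_dotProduct, sub_dotProduct, smul_eq_mul, hS, sum_dot,
      add_dotProduct]
    have h3 : ∑ t ∈ Finset.range N, ((q t ⬝ᵥ h) * (q t ⬝ᵥ v) + (q t ⬝ᵥ h) * (q t ⬝ᵥ v))
        = 2 * ∑ t ∈ Finset.range N, (q t ⬝ᵥ h) * (q t ⬝ᵥ v) := by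
      rw [Finset.mul_sum]; exact Finset.sum_congr rfl fun t _ => by ring
    have h4 : ∑ i, (h i * v i + h i * v i) = 2 * (h ⬝ᵥ v) := by
      rw [dotProduct, Finset.mul_sum]; exact Finset.sum_congr rfl fun t _ => by ring
    rw [h3, h4]
    field_simp
    ring
  have hfd : fderiv ℝ L h = dcl n c := by
    rw [hDeq] at hmess; exact hmess.fderiv
  rw [hfd]
  constructor
  · intro h0
    have hc0 : c = 0 := by
      funext i
      have := congrArg (fun (F : (Fin n → ℝ) →L[ℝ] ℝ) => F (Pi.single i 1)) h0
      simpa [dcl_apply, dotProduct_single] using this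
    rw [hc] at hc0
    have : w - lam • (S + ω • h) = 0 := by
      rcases smul_eq_zero.1 hc0 with h' | h'
      · exact absurd h' (inv_ne_zero hNne)
      · exact h'
    have h5 : lam • (S + ω • h) = w := (sub_eq_zero.1 this).symm
    rw [hS] at h5
    exact h5
  · intro heq
    have hc0 : c = 0 := by
      rw [hc]
      have : w - lam • (S + ω • h) = 0 := by
        rw [hS, heq]; simp
      rw [this, smul_zero]
    rw [hc0]
    apply ContinuousLinearMap.ext
    intro v
    simp [dcl_apply]
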